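/- Let G=(V,E) be a finite undirected graph. A 0-1 integer vector x ∈ {0,1}^V lies in the orientation polyhedron projection Q_orient(G) if and only if the set S = {u ∈ V : x_u = 1} is a pseudoforest deletion set of G, i.e., the graph G − S is a pseudoforest. -/

import Mathlib

/- Common definitions for the polyhedral study of FVS / PFDS. -/

open scoped Classical
open Finset

namespace FVS

noncomputable section

variable {V : Type*}

/-- Degree of `u` in the subgraph of `G` induced on the vertex set `S`. -/
def degIn [Fintype V] (G : SimpleGraph V) (S : Finset V) (u : V) : ℕ :=
  (S.filter fun v => G.Adj u v).card

/-- Number of edges of `G` with both endpoints in `S`, i.e. `|E[S]|`. -/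
def edgesIn [Fintype V] (G : SimpleGraph V) (S : Finset V) : ℕ :=
  (G.edgeFinset.filter fun e => ∀ v ∈ e, v ∈ S).card

/-- A finite graph is a pseudoforest if each connected component has at most as many
edges as vertices. -/
def IsPseudoforest {W : Type*} [Fintype W] (H : SimpleGraph W) : Prop :=
  ∀ C : H.ConnectedComponent,
    (H.edgeFinset.filter fun e => ∀ v ∈ e, H.connectedComponentMk v = C).card ≤
      (Finset.univ.filter fun v => H.connectedComponentMk v = C).card

/-- `U` is a pseudoforest deletion set for `G`: `G - U` is a pseudoforest. -/
def IsPFDS [Fintype V] (G : SimpleGraph V) (U : Finset V) : Prop :=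
  IsPseudoforest (G.induce {v : V | v ∉ U})

/-- `F` is a feedback vertex set for `G`: `G - F` is acyclic. -/
def IsFVS [Fintype V] (G : SimpleGraph V) (F : Finset V) : Prop :=
  (G.induce {v : V | v ∉ F}).IsAcyclic

/-- Membership in the orientation polyhedron `P_orient(G)`: for every edge `e = uv`,
`x_u + x_v + y_{e,u} + y_{e,v} ≥ 1`; for every vertex `u`,
`x_u + Σ_{e ∈ δ(u)} y_{e,u} ≤ 1`; and all variables are nonnegative.  The variables
`y e u` for pairs `(e, u)` where `e` is not an edge of `G` or `u` is not an endpoint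
of `e` do not occur in the formulation and are pinned to `0`. -/
def POrient [Fintype V] (G : SimpleGraph V) (x : V → ℝ) (y : Sym2 V → V → ℝ) : Prop :=
  (∀ u v, G.Adj u v → 1 ≤ x u + x v + y s(u, v) u + y s(u, v) v) ∧
  (∀ u, x u + ∑ e ∈ G.edgeFinset.filter (fun e => u ∈ e), y e u ≤ 1) ∧
  (∀ u, 0 ≤ x u) ∧
  (∀ e u, 0 ≤ y e u) ∧
  (∀ e u, ¬ (e ∈ G.edgeSet ∧ u ∈ e) → y e u = 0)

/-- Membership in `Q_orient(G)`, the projection of `P_orient(G)` to the `x`-variables. -/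
def QOrient [Fintype V] (G : SimpleGraph V) (x : V → ℝ) : Prop :=
  ∃ y : Sym2 V → V → ℝ, POrient G x y

/-- Membership in the weak density polyhedron `P_WD(G)`:
`x ≥ 0` and `Σ_{u ∈ S} (d_S(u) - 1) x_u ≥ |E[S]| - |S|` for every `S ⊆ V`. -/
def PWD [Fintype V] (G : SimpleGraph V) (x : V → ℝ) : Prop :=
  (∀ u, 0 ≤ x u) ∧
  ∀ S : Finset V, (edgesIn G S : ℝ) - S.card ≤ ∑ u ∈ S, ((degIn G S u : ℝ) - 1) * x u

/-- Membership in the strong density polyhedron `P_SD(G)`: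
`x ≥ 0` and `Σ_{u ∈ S} (d_S(u) - 1) x_u ≥ |E[S]| - |S| + 1` whenever `E[S] ≠ ∅`. -/
def PSD [Fintype V] (G : SimpleGraph V) (x : V → ℝ) : Prop :=
  (∀ u, 0 ≤ x u) ∧
  ∀ S : Finset V, edgesIn G S ≠ 0 →
    (edgesIn G S : ℝ) - S.card + 1 ≤ ∑ u ∈ S, ((degIn G S u : ℝ) - 1) * x u

/-- The induced subgraph `G[U]` is a cycle: it is connected and `2`-regular. -/
def IsInducedCycle [Fintype V] (G : SimpleGraph V) (U : Finset V) : Prop :=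
  (G.induce (U : Set V)).Connected ∧ ∀ u ∈ U, degIn G U u = 2

/-- Membership in the cycle cover polyhedron `P_cycle-cover(G)`. -/
def PCycleCover [Fintype V] (G : SimpleGraph V) (x : V → ℝ) : Prop :=
  (∀ u, 0 ≤ x u) ∧ ∀ U : Finset V, IsInducedCycle G U → 1 ≤ ∑ u ∈ U, x u

/-- The induced subgraph `G[U]` is a `2`-pseudotree: connected with at least `|U| + 1` edges. -/
def Is2PseudotreeInduced [Fintype V] (G : SimpleGraph V) (U : Finset V) : Prop :=
  (G.induce (U : Set V)).Connected ∧ U.card + 1 ≤ edgesIn G U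

/-- Membership in the `2`-pseudotree cover polyhedron `P_2PT-cover(G)`. -/
def P2PTCover [Fintype V] (G : SimpleGraph V) (x : V → ℝ) : Prop :=
  (∀ u, 0 ≤ x u) ∧ ∀ U : Finset V, Is2PseudotreeInduced G U → 1 ≤ ∑ u ∈ U, x u

/-- `(x, y)` is an extreme point of `P_orient(G)`: it is feasible and is not a proper
convex combination of two distinct points of `P_orient(G)`. -/
def POrientExtreme [Fintype V] (G : SimpleGraph V) (x : V → ℝ) (y : Sym2 V → V → ℝ) : Prop :=
  POrient G x y ∧
    ∀ (x₁ x₂ : V → ℝ) (y₁ y₂ : Sym2 V → V → ℝ) (t : ℝ),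
      POrient G x₁ y₁ → POrient G x₂ y₂ → 0 < t → t < 1 →
      (∀ v, x v = t * x₁ v + (1 - t) * x₂ v) →
      (∀ e u, y e u = t * y₁ e u + (1 - t) * y₂ e u) →
      x₁ = x₂ ∧ y₁ = y₂

/-- `(x, y)` is a minimal point of `P_orient(G)`: decreasing any single coordinate by
any `ε > 0`, keeping the other coordinates unchanged, yields a point outside the
polyhedron. -/
def POrientMinimal [Fintype V] (G : SimpleGraph V) (x : V → ℝ) (y : Sym2 V → V → ℝ) : Prop :=
  (∀ v, ∀ ε : ℝ, 0 < ε → ¬ POrient G (Function.update x v (x v - ε)) y) ∧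
  (∀ e u, ∀ ε : ℝ, 0 < ε →
    ¬ POrient G x (fun e' u' => if e' = e ∧ u' = u then y e u - ε else y e' u'))

/-- `x` is an extreme point of `P_WD(G)`: it is feasible and is not a proper convex
combination of two distinct points of `P_WD(G)`. -/
def PWDExtreme [Fintype V] (G : SimpleGraph V) (x : V → ℝ) : Prop :=
  PWD G x ∧
    ∀ (x₁ x₂ : V → ℝ) (t : ℝ), PWD G x₁ → PWD G x₂ → 0 < t → t < 1 →
      (∀ v, x v = t * x₁ v + (1 - t) * x₂ v) → x₁ = x₂

/-- The support graph `H(y)`: the bipartite graph on `V(G) ⊕ E(G)` joining a vertex `v`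
to an edge `e` whenever `v` is an endpoint of the edge `e` of `G` and `y e v > 0`. -/
def supportGraph [Fintype V] (G : SimpleGraph V) (y : Sym2 V → V → ℝ) :
    SimpleGraph (V ⊕ Sym2 V) :=
  SimpleGraph.fromRel fun a b =>
    ∃ v e, a = Sum.inl v ∧ b = Sum.inr e ∧ e ∈ G.edgeSet ∧ v ∈ e ∧ 0 < y e v

/-- The edge `e` lies on some cycle of `G`. -/
def OnCycle (G : SimpleGraph V) (e : Sym2 V) : Prop :=
  ∃ (u : V) (w : G.Walk u u), w.IsCycle ∧ e ∈ w.edges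

/-- `G` has a semi-disjoint cycle: a cycle containing at most one vertex whose degree
in `G` is strictly larger than `2`. -/
def HasSemiDisjointCycle [Fintype V] (G : SimpleGraph V) : Prop :=
  ∃ (u : V) (w : G.Walk u u), w.IsCycle ∧
    (w.support.toFinset.filter fun v => 2 < G.degree v).card ≤ 1

/-- The set `δ(F, V - F)` of edges of `G` with exactly one endpoint in `F`. -/
def cutEdges [Fintype V] (G : SimpleGraph V) (F : Finset V) : Finset (Sym2 V) :=
  G.edgeFinset.filter fun e => ∃ u v, e = s(u, v) ∧ u ∈ F ∧ v ∉ F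

/-- The function `f_x(S) = |E[S]| - |S| - Σ_{u ∈ S} (d_S(u) - 1) x_u`. -/
def fWD [Fintype V] (G : SimpleGraph V) (x : V → ℝ) (S : Finset V) : ℝ :=
  (edgesIn G S : ℝ) - S.card - ∑ u ∈ S, ((degIn G S u : ℝ) - 1) * x u

/-- The row vector `row(S)` of the weak density constraint for the set `S`:
its coordinate at `u` is `d_S(u) - 1` if `u ∈ S` and `0` otherwise. -/
def rowWD [Fintype V] (G : SimpleGraph V) (S : Finset V) (u : V) : ℝ :=
  if u ∈ S then (degIn G S u : ℝ) - 1 else 0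

/-- The constraints (orientation), (load), (cumulative) and nonnegativity of the
purely orientation-based ILP formulation for FVS, with one copy `y f` of the
orientation variables for each edge `f` of `G`:
* `x_v + x_w + y^f_{e,v} + y^f_{e,w} ≥ 1` for all edges `e = vw` and all `f ∈ E`;
* `x_v + Σ_{e = vw ∈ E} y^f_{e,w} ≥ 1` for all `v ∈ V` and all `f ∈ E`;
* `Σ_{v ∈ V - {a,b}} x_v + Σ_{e = vw ∈ E - {f}} (y^f_{e,w} + y^f_{e,v}) ≤ |V| - 2`
  for all `f = ab ∈ E`; and all variables nonnegative. -/
def OrientSD [Fintype V] (G : SimpleGraph V) (x : V → ℝ)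
    (y : Sym2 V → Sym2 V → V → ℝ) : Prop :=
  (∀ f ∈ G.edgeSet, ∀ v w, G.Adj v w →
    1 ≤ x v + x w + y f s(v, w) v + y f s(v, w) w) ∧
  (∀ f ∈ G.edgeSet, ∀ v : V, 1 ≤ x v + ∑ w ∈ G.neighborFinset v, y f s(v, w) w) ∧
  (∀ a b : V, G.Adj a b →
    (∑ v ∈ Finset.univ \ {a, b}, x v) +
      (∑ e ∈ G.edgeFinset.erase s(a, b),
        ∑ u ∈ Finset.univ.filter (fun u => u ∈ e), y s(a, b) e u)
      ≤ (Fintype.card V : ℝ) - 2) ∧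
  (∀ u, 0 ≤ x u) ∧ (∀ f e u, 0 ≤ y f e u)

end
end FVS

namespace FVS

section Aux
open SimpleGraph


lemma comp_bound {W : Type*} [Fintype W] (H : SimpleGraph W) (C : H.ConnectedComponent)
    (hC : (H.edgeFinset.filter fun e => ∀ v ∈ e, H.connectedComponentMk v = C).card ≤
      (Finset.univ.filter fun v => H.connectedComponentMk v = C).card)
    (T : Finset W) :
    (H.edgeFinset.filter fun e =>
        (∀ v ∈ e, H.connectedComponentMk v = C) ∧ ∀ v ∈ e, v ∈ T).card
      ≤ (T.filter fun v => H.connectedComponentMk v = C).card := by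
  classical
  set TC := T.filter fun v => H.connectedComponentMk v = C with hTCdef
  set VC := Finset.univ.filter fun v => H.connectedComponentMk v = C with hVCdef
  set EC := H.edgeFinset.filter fun e => ∀ v ∈ e, H.connectedComponentMk v = C with hECdef
  rcases TC.eq_empty_or_nonempty with hTC | hTC
  · -- no vertex of C is in T, so there is no edge inside
    convert Nat.zero_le _
    rw [Finset.card_eq_zero, Finset.filter_eq_empty_iff]
    rintro e he ⟨h1, h2⟩
    have hv := e.out_fst_mem
    have : e.out.1 ∈ TC := Finset.mem_filter.2 ⟨h2 _ hv, h1 _ hv⟩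
    simp [hTC] at this
  · set d : W → ℕ := fun u => TC.inf' hTC (fun t => H.dist u t) with hd
    -- for every vertex in VC \ TC there is a neighbour strictly closer to TC
    have step : ∀ u : W, ∃ w : W, u ∈ VC \ TC → H.Adj u w ∧ d w < d u := by
      intro u
      by_cases hu : u ∈ VC \ TC
      · obtain ⟨t, htTC, hdt⟩ := Finset.exists_mem_eq_inf' hTC (fun t => H.dist u t)
        have huC : H.connectedComponentMk u = C := (Finset.mem_filter.1 (Finset.mem_sdiff.1 hu).1).2
        have htC : H.connectedComponentMk t = C := (Finset.mem_filter.1 htTC).2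
        have hreach : H.Reachable u t := ConnectedComponent.exact (huC.trans htC.symm)
        have hne : u ≠ t := by
          rintro rfl
          exact (Finset.mem_sdiff.1 hu).2 htTC
        have hpos : 0 < H.dist u t := hreach.pos_dist_of_ne hne
        obtain ⟨p, hp⟩ := hreach.exists_walk_length_eq_dist
        cases p with
        | nil => exact absurd rfl hne
        | cons hadj q =>
          rename_i w
          refine ⟨w, fun _ => ⟨hadj, ?_⟩⟩
          have h1 : d w ≤ H.dist w t := Finset.inf'_le _ htTC
          have h2 : H.dist w t ≤ q.length := SimpleGraph.dist_le q
          have h3 : q.length + 1 = H.dist u t := by simpa using hp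
          have h4 : d u = H.dist u t := hdt
          omega
      · exact ⟨u, fun h => absurd h hu⟩
    choose g hg using step
    have hTCVC : TC ⊆ VC := fun v hv =>
      Finset.mem_filter.2 ⟨Finset.mem_univ _, (Finset.mem_filter.1 hv).2⟩
    -- edges of EC not inside T
    set M := EC.filter fun e => ¬ ∀ v ∈ e, v ∈ T with hM
    have hinj : (VC \ TC).card ≤ M.card := by
      apply Finset.card_le_card_of_injOn (fun u => s(u, g u))
      · intro u hu
        obtain ⟨hadj, _⟩ := hg u hu
        have huC : H.connectedComponentMk u = C := (Finset.mem_filter.1 (Finset.mem_sdiff.1 hu).1).2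
        have huT : u ∉ T := by
          intro huT
          exact (Finset.mem_sdiff.1 hu).2 (Finset.mem_filter.2 ⟨huT, huC⟩)
        refine Finset.mem_filter.2 ⟨Finset.mem_filter.2 ⟨?_, ?_⟩, ?_⟩
        · exact SimpleGraph.mem_edgeFinset.2 hadj
        · intro v hv
          rcases Sym2.mem_iff.1 hv with rfl | rfl
          · exact huC
          · exact (ConnectedComponent.connectedComponentMk_eq_of_adj hadj).symm.trans huC
        · intro hall
          exact huT (hall u (Sym2.mem_mk_left _ _))
      · intro u hu u' hu' heq
        rw [Sym2.eq_iff] at heq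
        rcases heq with ⟨rfl, -⟩ | ⟨h1, h2⟩
        · rfl
        · exfalso
          have l1 := (hg u hu).2
          have l2 := (hg u' hu').2
          rw [← h1] at l2; rw [h2] at l1
          omega
    have hsplit : (EC.filter fun e => ∀ v ∈ e, v ∈ T).card + M.card = EC.card :=
      Finset.card_filter_add_card_filter_not _
    have hVCsplit : (VC \ TC).card = VC.card - TC.card := Finset.card_sdiff_of_subset hTCVC
    have hle : TC.card ≤ VC.card := Finset.card_le_card hTCVC
    have hgoal : (EC.filter fun e => ∀ v ∈ e, v ∈ T) =
        H.edgeFinset.filter fun e =>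
          (∀ v ∈ e, H.connectedComponentMk v = C) ∧ ∀ v ∈ e, v ∈ T := by
      rw [hECdef, Finset.filter_filter]
    rw [← hgoal]
    omega


lemma mk_eq_of_mem_edge {W : Type*} [Fintype W] {H : SimpleGraph W} {e : Sym2 W}
    (he : e ∈ H.edgeFinset) {v w : W} (hv : v ∈ e) (hw : w ∈ e) :
    H.connectedComponentMk v = H.connectedComponentMk w := by
  induction e with
  | _ a b =>
    have hadj : H.Adj a b := SimpleGraph.mem_edgeFinset.1 he
    rcases Sym2.mem_iff.1 hv with rfl | rfl <;> rcases Sym2.mem_iff.1 hw with rfl | rfl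
    · rfl
    · exact SimpleGraph.ConnectedComponent.connectedComponentMk_eq_of_adj hadj
    · exact (SimpleGraph.ConnectedComponent.connectedComponentMk_eq_of_adj hadj).symm
    · rfl

lemma edgesIn_le_card {W : Type*} [Fintype W] (H : SimpleGraph W)
    (hH : IsPseudoforest H) (T : Finset W) : edgesIn H T ≤ T.card := by
  classical
  haveI : Fintype H.ConnectedComponent := Fintype.ofFinite _
  have hT : T.card = ∑ C : H.ConnectedComponent,
      (T.filter fun v => H.connectedComponentMk v = C).card :=
    Finset.card_eq_sum_card_fiberwise (fun x _ => Finset.mem_univ _)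
  have hE : edgesIn H T = ∑ C : H.ConnectedComponent,
      ((H.edgeFinset.filter fun e => ∀ v ∈ e, v ∈ T).filter
        fun e => H.connectedComponentMk e.out.1 = C).card :=
    Finset.card_eq_sum_card_fiberwise (fun x _ => Finset.mem_univ _)
  rw [hT, hE]
  refine Finset.sum_le_sum fun C _ => le_trans (le_trans (Finset.card_le_card ?_)
    (le_of_eq rfl)) (comp_bound H C (hH C) T)
  intro e he
  rw [Finset.mem_filter, Finset.mem_filter] at he
  obtain ⟨⟨he1, he2⟩, he3⟩ := he
  refine Finset.mem_filter.2 ⟨he1, fun v hv => ?_, he2⟩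
  exact (mk_eq_of_mem_edge he1 hv e.out_fst_mem).trans he3


lemma card_le_edgesIn {W : Type*} [Fintype W] (H : SimpleGraph W)
    (s : Finset {e : Sym2 W // e ∈ H.edgeFinset}) (T : Finset W)
    (hT : ∀ e ∈ s, ∀ v ∈ e.1, v ∈ T) : s.card ≤ edgesIn H T := by
  classical
  rw [edgesIn]
  apply Finset.card_le_card_of_injOn (fun e => e.1)
  · intro e he
    exact Finset.mem_filter.2 ⟨e.2, hT e he⟩
  · exact fun a _ b _ h => Subtype.ext h

end Aux

set_option maxHeartbeats 2000000 in
/-- A 0-1 vector `x` lies in `Q_orient(G)` if and only if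
`S = {u : x_u = 1}` is a pseudoforest deletion set of `G`. -/
theorem stmt_0 {V : Type*} [Fintype V] (G : SimpleGraph V) (x : V → ℝ)
    (hx : ∀ u, x u = 0 ∨ x u = 1) :
    QOrient G x ↔ IsPFDS G (Finset.univ.filter fun u => x u = 1) := by
  classical
  set D := Finset.univ.filter fun u => x u = 1 with hD
  set S : Set V := {v : V | v ∉ D} with hSdef
  set H : SimpleGraph S := G.induce S with hHdef
  have hxnn : ∀ w, 0 ≤ x w := by
    intro w; rcases hx w with h | h <;> rw [h] <;> norm_num
  have hmemS : ∀ w, x w = 0 → w ∈ S := by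
    intro w hw hwD
    rw [hD, Finset.mem_filter] at hwD
    rw [hw] at hwD; norm_num at hwD
  have hxS : ∀ v : S, x ↑v = 0 := by
    intro v
    rcases hx ↑v with h | h
    · exact h
    · exact absurd (show (↑v : V) ∈ D from by
        rw [hD, Finset.mem_filter]; exact ⟨Finset.mem_univ _, h⟩) v.2
  have hadjG : ∀ a b : S, H.Adj a b ↔ G.Adj ↑a ↑b := by
    intro a b; rw [hHdef]; simp
  have mapEdge : ∀ e : Sym2 S, e ∈ H.edgeFinset → Sym2.map (Subtype.val : S → V) e ∈ G.edgeFinset := by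
    intro e
    induction e with
    | _ a b =>
      intro he
      rw [Sym2.map_pair_eq]
      exact SimpleGraph.mem_edgeFinset.2 ((hadjG a b).1 (SimpleGraph.mem_edgeFinset.1 he))
  rw [show IsPFDS G D ↔ IsPseudoforest H from Iff.rfl]
  constructor
  · rintro ⟨y, hor, hload, hx0, hy0, hsupp⟩ C
    set VC := Finset.univ.filter fun v => H.connectedComponentMk v = C with hVC
    set EC := H.edgeFinset.filter fun e => ∀ v ∈ e, H.connectedComponentMk v = C with hEC
    set F : Sym2 S → S → ℝ := fun e u =>
      if (↑u : V) ∈ Sym2.map (Subtype.val : S → V) e then y (Sym2.map (Subtype.val : S → V) e) ↑u else 0 with hF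
    have hFnn : ∀ e u, 0 ≤ F e u := by
      intro e u; rw [hF]; dsimp only; split_ifs
      · exact hy0 _ _
      · exact le_refl 0
    have h1 : ∀ e ∈ EC, (1 : ℝ) ≤ ∑ u ∈ VC, F e u := by
      intro e
      induction e with
      | _ a b =>
        intro he
        rw [hEC, Finset.mem_filter] at he
        obtain ⟨heE, hcomp⟩ := he
        have hadj : H.Adj a b := SimpleGraph.mem_edgeFinset.1 heE
        have hne : a ≠ b := hadj.ne
        have haVC : a ∈ VC := Finset.mem_filter.2 ⟨Finset.mem_univ _,
          hcomp a (Sym2.mem_mk_left _ _)⟩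
        have hbVC : b ∈ VC := Finset.mem_filter.2 ⟨Finset.mem_univ _,
          hcomp b (Sym2.mem_mk_right _ _)⟩
        have hsum : F s(a, b) a + (F s(a, b) b + ∑ u ∈ (VC.erase a).erase b, F s(a, b) u)
            = ∑ u ∈ VC, F s(a, b) u := by
          rw [Finset.add_sum_erase _ _ (Finset.mem_erase.2 ⟨hne.symm, hbVC⟩),
            Finset.add_sum_erase _ _ haVC]
        have htail : (0 : ℝ) ≤ ∑ u ∈ (VC.erase a).erase b, F s(a, b) u :=
          Finset.sum_nonneg fun u _ => hFnn _ _
        have hFa : F s(a, b) a = y s((↑a : V), (↑b : V)) ↑a := by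
          rw [hF]; dsimp only; rw [Sym2.map_pair_eq, if_pos (Sym2.mem_mk_left _ _)]
        have hFb : F s(a, b) b = y s((↑a : V), (↑b : V)) ↑b := by
          rw [hF]; dsimp only; rw [Sym2.map_pair_eq, if_pos (Sym2.mem_mk_right _ _)]
        have horient := hor ↑a ↑b ((hadjG a b).1 hadj)
        rw [hxS a, hxS b] at horient
        rw [← hsum, hFa, hFb]
        linarith
    have h2 : ∀ u ∈ VC, ∑ e ∈ EC, F e u ≤ 1 := by
      intro u _
      have e1 : ∑ e ∈ EC, F e u
          = ∑ e ∈ EC.filter (fun e => (↑u : V) ∈ Sym2.map (Subtype.val : S → V) e),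
              y (Sym2.map (Subtype.val : S → V) e) ↑u := (Finset.sum_filter _ _).symm
      have e2 : ∑ e ∈ EC.filter (fun e => (↑u : V) ∈ Sym2.map (Subtype.val : S → V) e),
              y (Sym2.map (Subtype.val : S → V) e) ↑u
          = ∑ e' ∈ (EC.filter (fun e => (↑u : V) ∈ Sym2.map (Subtype.val : S → V) e)).image
              (Sym2.map (Subtype.val : S → V)), y e' ↑u :=
        by
          refine (Finset.sum_image (ι := Sym2 V) (f := fun e' => y e' (↑u : V)) ?_).symm
          intro p _ q _ h
          exact Sym2.map.injective Subtype.val_injective h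
      have e3 : (EC.filter (fun e => (↑u : V) ∈ Sym2.map (Subtype.val : S → V) e)).image
            (Sym2.map (Subtype.val : S → V)) ⊆ G.edgeFinset.filter (fun e => (↑u : V) ∈ e) := by
        intro e' he'
        obtain ⟨e, he, rfl⟩ := Finset.mem_image.1 he'
        rw [Finset.mem_filter] at he
        have h1 := he.1
        rw [hEC] at h1
        exact Finset.mem_filter.2 ⟨mapEdge e (Finset.mem_of_mem_filter e h1), he.2⟩
      have e4 := Finset.sum_le_sum_of_subset_of_nonneg e3 fun i _ _ => hy0 i ↑u
      have e5 := hload ↑u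
      rw [hxS u] at e5
      rw [e1, e2]
      linarith
    have key : (EC.card : ℝ) ≤ VC.card := by
      calc (EC.card : ℝ) = ∑ _e ∈ EC, (1 : ℝ) := by simp
        _ ≤ ∑ e ∈ EC, ∑ u ∈ VC, F e u := Finset.sum_le_sum h1
        _ = ∑ u ∈ VC, ∑ e ∈ EC, F e u := Finset.sum_comm
        _ ≤ ∑ _u ∈ VC, (1 : ℝ) := Finset.sum_le_sum h2
        _ = VC.card := by simp
    have hkey := Nat.cast_le.mp key
    convert hkey using 2
    rw [hEC]
    exact Finset.filter_congr_decidable _ _ _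
  · intro hPF
    have hHall : ∀ s : Finset {e : Sym2 S // e ∈ H.edgeFinset},
        s.card ≤ (s.biUnion fun e => Finset.univ.filter (· ∈ e.1)).card := by
      intro s
      refine le_trans (card_le_edgesIn H s _ ?_)
        (edgesIn_le_card H hPF (s.biUnion fun e => Finset.univ.filter (· ∈ e.1)))
      intro e he v hv
      exact Finset.mem_biUnion.2 ⟨e, he, Finset.mem_filter.2 ⟨Finset.mem_univ _, hv⟩⟩
    obtain ⟨f, hfinj, hf⟩ := (Finset.all_card_le_biUnion_card_iff_exists_injective _).1 hHall
    have hfmem : ∀ e, f e ∈ e.1 := fun e => (Finset.mem_filter.1 (hf e)).2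
    set P : Sym2 V → V → Prop := fun e u =>
      ∃ e' : {e : Sym2 S // e ∈ H.edgeFinset},
        Sym2.map (Subtype.val : S → V) e'.1 = e ∧ ((f e' : S) : V) = u with hP
    have hynn : ∀ e u, (0 : ℝ) ≤ if P e u then 1 else 0 := by
      intro e u; split_ifs <;> norm_num
    refine ⟨fun e u => if P e u then 1 else 0, ?_, ?_, ?_, hynn, ?_⟩
    · -- orientation constraints
      intro u v huv
      dsimp only
      have h0u := hynn s(u, v) u
      have h0v := hynn s(u, v) v
      rcases hx u with hu0 | hu1
      · rcases hx v with hv0 | hv1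
        · have huS : u ∈ S := hmemS u hu0
          have hvS : v ∈ S := hmemS v hv0
          have hHadj : H.Adj ⟨u, huS⟩ ⟨v, hvS⟩ := (hadjG _ _).2 huv
          set e' : {e : Sym2 S // e ∈ H.edgeFinset} :=
            ⟨s(⟨u, huS⟩, ⟨v, hvS⟩), SimpleGraph.mem_edgeFinset.2 hHadj⟩ with he'
          have hmap : Sym2.map (Subtype.val : S → V) e'.1 = s(u, v) := by
            rw [he']; exact Sym2.map_pair_eq _ _ _
          rcases Sym2.mem_iff.1 (hfmem e') with hfa | hfb
          · have hPu : P s(u, v) u := ⟨e', hmap, by rw [hfa]⟩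
            rw [hu0, hv0, if_pos hPu]
            linarith
          · have hPv : P s(u, v) v := ⟨e', hmap, by rw [hfb]⟩
            rw [hu0, hv0, if_pos hPv]
            linarith
        · rw [hv1]; linarith [hxnn u]
      · rw [hu1]; linarith [hxnn v]
    · -- load constraints
      intro u
      dsimp only
      have hsum : ∑ e ∈ G.edgeFinset.filter (fun e => u ∈ e), (if P e u then (1 : ℝ) else 0)
          = (((G.edgeFinset.filter (fun e => u ∈ e)).filter (fun e => P e u)).card : ℝ) :=
        Finset.sum_boole _ _
      rcases hx u with hu0 | hu1
      · have hcard : ((G.edgeFinset.filter (fun e => u ∈ e)).filter (fun e => P e u)).card ≤ 1 := by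
          apply Finset.card_le_one.2
          intro e1 h1 e2 h2
          obtain ⟨a1, ha1, hb1⟩ := (Finset.mem_filter.1 h1).2
          obtain ⟨a2, ha2, hb2⟩ := (Finset.mem_filter.1 h2).2
          have : f a1 = f a2 := Subtype.val_injective (hb1.trans hb2.symm)
          have : a1 = a2 := hfinj this
          rw [← ha1, ← ha2, this]
        rw [hu0, hsum]
        have : (((G.edgeFinset.filter (fun e => u ∈ e)).filter
            (fun e => P e u)).card : ℝ) ≤ 1 := by exact_mod_cast hcard
        linarith
      · have hempty : (G.edgeFinset.filter (fun e => u ∈ e)).filter (fun e => P e u) = ∅ := by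
          rw [Finset.filter_eq_empty_iff]
          rintro e _ ⟨e', _, heq⟩
          have huS : u ∈ S := heq ▸ (f e').2
          rw [hSdef] at huS
          exact huS (Finset.mem_filter.2 ⟨Finset.mem_univ _, hu1⟩)
        rw [hu1, hsum, hempty]
        simp
    · intro u; exact hxnn u
    · -- support
      intro e u hne
      dsimp only
      rw [if_neg]
      rintro ⟨e', rfl, rfl⟩
      apply hne
      constructor
      · exact SimpleGraph.mem_edgeFinset.1 (mapEdge e'.1 e'.2)
      · exact Sym2.mem_map.2 ⟨f e', hfmem e', rfl⟩

end FVS
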